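/- Let A_1, A_2 be Hermitian matrices on a d-dimensional complex inner product space with A_1 ⪰ I and A_2 ⪰ I, let t ∈ (0,1), and set Q_k := (A_k − I)/2. Then det[h_{t,−}(A_1)] · det[f_t(A_1) + f_{1−t}(A_2)] · det[h_{1−t,−}(A_2)] = 2^d · det[(A_1+I)^t (A_2+I)^{1−t} − (A_1−I)^t (A_2−I)^{1−t}] = 4^d · det[(Q_1+I)^t (Q_2+I)^{1−t} − Q_1^t Q_2^{1−t}], where powers of the positive semidefinite matrices A_k ± I, Q_k, Q_k + I are taken by the continuous functional calculus (with 0^t := 0 for t > 0). -/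

import Mathlib

open Matrix
open scoped ComplexOrder

noncomputable section

variable {n : Type*} [Fintype n] [DecidableEq n]

/-- Real power `A^t` of a (positive semidefinite Hermitian) matrix via the continuous
functional calculus, with the convention `0^t = 0` for `t > 0`. -/
def mpow (A : Matrix n n ℂ) (t : ℝ) : Matrix n n ℂ := cfc (fun x : ℝ => x ^ t) A

/-- `h_{t,−}(A) = (A+I)^t − (A−I)^t` via the continuous functional calculus. -/
def hMinusMat (t : ℝ) (A : Matrix n n ℂ) : Matrix n n ℂ :=
  cfc (fun s : ℝ => (s + 1) ^ t - (s - 1) ^ t) A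

/-- `f_t(A)` via the continuous functional calculus, where
`f_t(s) = ((s+1)^t + (s−1)^t)/((s+1)^t − (s−1)^t)`. -/
def fPowMat (t : ℝ) (A : Matrix n n ℂ) : Matrix n n ℂ :=
  cfc (fun s : ℝ => ((s + 1) ^ t + (s - 1) ^ t) / ((s + 1) ^ t - (s - 1) ^ t)) A

namespace GaussianAux

lemma contOn (A : Matrix n n ℂ) (f : ℝ → ℝ) : ContinuousOn f (spectrum ℝ A) :=
  (Matrix.finite_real_spectrum (A := A)).continuousOn f

lemma contOnImg (A : Matrix n n ℂ) (g f : ℝ → ℝ) :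
    ContinuousOn f (g '' spectrum ℝ A) :=
  ((Matrix.finite_real_spectrum (A := A)).image g).continuousOn f

lemma herm {A : Matrix n n ℂ} (hA : (A - 1).PosSemidef) : A.IsHermitian := by
  simpa using hA.1.add (isHermitian_one (n := n) (α := ℂ))

lemma spec_subset {A : Matrix n n ℂ} (hA : (A - 1).PosSemidef) :
    spectrum ℝ A ⊆ Set.Ici 1 := by
  intro x hx
  have h1 : x - 1 ∈ spectrum ℝ (A - algebraMap ℝ (Matrix n n ℂ) 1) := by
    rw [← spectrum.sub_singleton_eq]
    exact Set.sub_mem_sub hx rfl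
  rw [_root_.map_one] at h1
  rw [Matrix.IsHermitian.spectrum_real_eq_range_eigenvalues hA.1] at h1
  obtain ⟨i, hi⟩ := h1
  have h2 := hA.eigenvalues_nonneg i
  rw [hi] at h2
  simpa [Set.mem_Ici] using by linarith

lemma hm_pos {t s : ℝ} (ht : 0 < t) (hs : 1 ≤ s) :
    0 < (s + 1) ^ t - (s - 1) ^ t :=
  sub_pos.2 (Real.rpow_lt_rpow (by linarith) (by linarith) ht)

omit [Fintype n] [DecidableEq n] in
lemma real_smul_complex (r : ℝ) (M : Matrix n n ℂ) : r • M = ((r : ℂ)) • M := by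
  ext i j
  simp [Matrix.smul_apply, Complex.real_smul]

omit [Fintype n] [DecidableEq n] in
lemma half_smul (M : Matrix n n ℂ) : (2 : ℂ)⁻¹ • M = ((2 : ℝ)⁻¹) • M := by
  rw [real_smul_complex]
  norm_num

variable {A : Matrix n n ℂ} (hA : (A - 1).PosSemidef) {t : ℝ} (ht : 0 < t)

include hA in
lemma add_one_cfc : A + 1 = cfc (fun s : ℝ => s + 1) A := by
  have hH := herm hA
  have h := cfc_add_const (1 : ℝ) (fun s : ℝ => s) A (contOn A _) hH
  have hid := cfc_id' ℝ A hH
  rw [hid, _root_.map_one] at h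
  exact h.symm

include hA in
lemma sub_one_cfc : A - 1 = cfc (fun s : ℝ => s - 1) A := by
  have hH := herm hA
  have h := cfc_sub (fun s : ℝ => s) (fun _ : ℝ => 1) A (contOn A _) (contOn A _)
  have hid := cfc_id' ℝ A hH
  have hone := cfc_const_one ℝ A hH
  rw [hid, hone] at h
  exact h.symm

include hA in
lemma half_sub_one_cfc : (2 : ℂ)⁻¹ • (A - 1) = cfc (fun s : ℝ => (2 : ℝ)⁻¹ * (s - 1)) A := by
  have h := cfc_const_mul ((2 : ℝ)⁻¹) (fun s : ℝ => s - 1) A (contOn A _)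
  rw [← sub_one_cfc hA] at h
  rw [half_smul]
  exact h.symm

include hA in
lemma half_sub_one_add_one_cfc :
    (2 : ℂ)⁻¹ • (A - 1) + 1 = cfc (fun s : ℝ => (2 : ℝ)⁻¹ * (s - 1) + 1) A := by
  have hH := herm hA
  have h := cfc_add_const (1 : ℝ) (fun s : ℝ => (2 : ℝ)⁻¹ * (s - 1)) A (contOn A _) hH
  rw [← half_sub_one_cfc hA, _root_.map_one] at h
  exact h.symm

include hA in
lemma mpow_add_one : mpow (A + 1) t = cfc (fun s : ℝ => (s + 1) ^ t) A := by
  have hH := herm hA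
  rw [mpow, add_one_cfc hA]
  exact (cfc_comp' (fun x : ℝ => x ^ t) (fun s : ℝ => s + 1) A
    (contOnImg A _ _) (contOn A _) hH).symm

include hA in
lemma mpow_sub_one : mpow (A - 1) t = cfc (fun s : ℝ => (s - 1) ^ t) A := by
  have hH := herm hA
  rw [mpow, sub_one_cfc hA]
  exact (cfc_comp' (fun x : ℝ => x ^ t) (fun s : ℝ => s - 1) A
    (contOnImg A _ _) (contOn A _) hH).symm

include hA ht in
lemma mpow_half : mpow ((2 : ℂ)⁻¹ • (A - 1)) t
    = (((2 : ℝ)⁻¹ ^ t) : ℝ) • cfc (fun s : ℝ => (s - 1) ^ t) A := by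
  have hH := herm hA
  rw [mpow, half_sub_one_cfc hA]
  calc cfc (fun x : ℝ => x ^ t) (cfc (fun s : ℝ => (2 : ℝ)⁻¹ * (s - 1)) A)
      = cfc (fun s : ℝ => ((2 : ℝ)⁻¹ * (s - 1)) ^ t) A :=
        (cfc_comp' (fun x : ℝ => x ^ t) (fun s : ℝ => (2 : ℝ)⁻¹ * (s - 1)) A
          (contOnImg A _ _) (contOn A _) hH).symm
    _ = cfc (fun s : ℝ => (2 : ℝ)⁻¹ ^ t * (s - 1) ^ t) A := by
        refine cfc_congr fun s hs => ?_
        have hs1 : (1 : ℝ) ≤ s := spec_subset hA hs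
        exact Real.mul_rpow (by norm_num) (by linarith)
    _ = (((2 : ℝ)⁻¹ ^ t) : ℝ) • cfc (fun s : ℝ => (s - 1) ^ t) A :=
        cfc_const_mul ((2 : ℝ)⁻¹ ^ t) (fun s : ℝ => (s - 1) ^ t) A (contOn A _)

include hA ht in
lemma mpow_half_add_one : mpow ((2 : ℂ)⁻¹ • (A - 1) + 1) t
    = (((2 : ℝ)⁻¹ ^ t) : ℝ) • cfc (fun s : ℝ => (s + 1) ^ t) A := by
  have hH := herm hA
  rw [mpow, half_sub_one_add_one_cfc hA]
  calc cfc (fun x : ℝ => x ^ t) (cfc (fun s : ℝ => (2 : ℝ)⁻¹ * (s - 1) + 1) A)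
      = cfc (fun s : ℝ => ((2 : ℝ)⁻¹ * (s - 1) + 1) ^ t) A :=
        (cfc_comp' (fun x : ℝ => x ^ t) (fun s : ℝ => (2 : ℝ)⁻¹ * (s - 1) + 1) A
          (contOnImg A _ _) (contOn A _) hH).symm
    _ = cfc (fun s : ℝ => (2 : ℝ)⁻¹ ^ t * (s + 1) ^ t) A := by
        refine cfc_congr fun s hs => ?_
        have hs1 : (1 : ℝ) ≤ s := spec_subset hA hs
        have h2 : (2 : ℝ)⁻¹ * (s - 1) + 1 = (2 : ℝ)⁻¹ * (s + 1) := by ring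
        rw [h2]
        exact Real.mul_rpow (by norm_num) (by linarith)
    _ = (((2 : ℝ)⁻¹ ^ t) : ℝ) • cfc (fun s : ℝ => (s + 1) ^ t) A :=
        cfc_const_mul ((2 : ℝ)⁻¹ ^ t) (fun s : ℝ => (s + 1) ^ t) A (contOn A _)

include hA in
lemma hMinus_eq : hMinusMat t A
    = cfc (fun s : ℝ => (s + 1) ^ t) A - cfc (fun s : ℝ => (s - 1) ^ t) A := by
  rw [hMinusMat]
  exact cfc_sub (fun s : ℝ => (s + 1) ^ t) (fun s : ℝ => (s - 1) ^ t) A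
    (contOn A _) (contOn A _)

include hA ht in
lemma hf_eq : hMinusMat t A * fPowMat t A
    = cfc (fun s : ℝ => (s + 1) ^ t) A + cfc (fun s : ℝ => (s - 1) ^ t) A := by
  rw [hMinusMat, fPowMat, ← cfc_mul _ _ A (contOn A _) (contOn A _),
    ← cfc_add A (fun s : ℝ => (s + 1) ^ t) (fun s : ℝ => (s - 1) ^ t) (contOn A _) (contOn A _)]
  refine cfc_congr fun s hs => ?_
  have hs1 : (1 : ℝ) ≤ s := spec_subset hA hs
  have hne : (s + 1) ^ t - (s - 1) ^ t ≠ 0 := ne_of_gt (hm_pos ht hs1)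
  rw [mul_comm, div_mul_cancel₀ _ hne]

include hA ht in
lemma fh_eq : fPowMat t A * hMinusMat t A
    = cfc (fun s : ℝ => (s + 1) ^ t) A + cfc (fun s : ℝ => (s - 1) ^ t) A := by
  rw [← hf_eq hA ht, hMinusMat, fPowMat, ← cfc_mul _ _ A (contOn A _) (contOn A _),
    ← cfc_mul _ _ A (contOn A _) (contOn A _)]
  exact cfc_congr fun s _ => mul_comm _ _

end GaussianAux

open GaussianAux

/-- For Hermitian `A₁, A₂ ⪰ I`, `t ∈ (0,1)` and `Q_k = (A_k − I)/2`:
`det[h_{t,−}(A₁)] det[f_t(A₁) + f_{1−t}(A₂)] det[h_{1−t,−}(A₂)]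
 = 2^d det[(A₁+I)^t (A₂+I)^{1−t} − (A₁−I)^t (A₂−I)^{1−t}]
 = 4^d det[(Q₁+I)^t (Q₂+I)^{1−t} − Q₁^t Q₂^{1−t}]`. -/
theorem gaussian_overlap_determinant_identity
    (A₁ A₂ : Matrix n n ℂ)
    (hA₁ : (A₁ - 1).PosSemidef) (hA₂ : (A₂ - 1).PosSemidef)
    (t : ℝ) (ht : t ∈ Set.Ioo (0 : ℝ) 1) :
    (hMinusMat t A₁).det * (fPowMat t A₁ + fPowMat (1 - t) A₂).det *
        (hMinusMat (1 - t) A₂).det =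
      (2 : ℂ) ^ Fintype.card n *
        (mpow (A₁ + 1) t * mpow (A₂ + 1) (1 - t) -
          mpow (A₁ - 1) t * mpow (A₂ - 1) (1 - t)).det ∧
    (2 : ℂ) ^ Fintype.card n *
        (mpow (A₁ + 1) t * mpow (A₂ + 1) (1 - t) -
          mpow (A₁ - 1) t * mpow (A₂ - 1) (1 - t)).det =
      (4 : ℂ) ^ Fintype.card n *
        (mpow ((2 : ℂ)⁻¹ • (A₁ - 1) + 1) t * mpow ((2 : ℂ)⁻¹ • (A₂ - 1) + 1) (1 - t) -
          mpow ((2 : ℂ)⁻¹ • (A₁ - 1)) t * mpow ((2 : ℂ)⁻¹ • (A₂ - 1)) (1 - t)).det := by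
  obtain ⟨ht0, ht1⟩ := ht
  have ht0' : 0 < 1 - t := by linarith
  set P₁ := cfc (fun s : ℝ => (s + 1) ^ t) A₁ with hP₁
  set M₁ := cfc (fun s : ℝ => (s - 1) ^ t) A₁ with hM₁
  set P₂ := cfc (fun s : ℝ => (s + 1) ^ (1 - t)) A₂ with hP₂
  set M₂ := cfc (fun s : ℝ => (s - 1) ^ (1 - t)) A₂ with hM₂
  have e1 : hMinusMat t A₁ * (fPowMat t A₁ + fPowMat (1 - t) A₂) * hMinusMat (1 - t) A₂
      = (2 : ℂ) • (P₁ * P₂ - M₁ * M₂) := by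
    rw [mul_add, add_mul, hf_eq hA₁ ht0, mul_assoc, fh_eq hA₂ ht0',
      hMinus_eq hA₁ (t := t), hMinus_eq hA₂ (t := 1 - t), two_smul]
    noncomm_ring
  have e2 : mpow ((2 : ℂ)⁻¹ • (A₁ - 1) + 1) t * mpow ((2 : ℂ)⁻¹ • (A₂ - 1) + 1) (1 - t) -
        mpow ((2 : ℂ)⁻¹ • (A₁ - 1)) t * mpow ((2 : ℂ)⁻¹ • (A₂ - 1)) (1 - t)
      = (2 : ℂ)⁻¹ • (P₁ * P₂ - M₁ * M₂) := by
    rw [mpow_half_add_one hA₁ ht0, mpow_half_add_one hA₂ ht0', mpow_half hA₁ ht0,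
      mpow_half hA₂ ht0', smul_mul_assoc, smul_mul_assoc, mul_smul_comm, mul_smul_comm,
      smul_smul, smul_smul, ← smul_sub]
    have hc : (2 : ℝ)⁻¹ ^ t * (2 : ℝ)⁻¹ ^ (1 - t) = (2 : ℝ)⁻¹ := by
      rw [← Real.rpow_add (by norm_num)]
      norm_num
    rw [hc, half_smul]
  constructor
  · rw [← det_mul, ← det_mul, e1, mpow_add_one hA₁, mpow_add_one hA₂,
      mpow_sub_one hA₁, mpow_sub_one hA₂, det_smul]
  · rw [e2, half_smul, real_smul_complex, det_smul, mpow_add_one hA₁, mpow_add_one hA₂,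
      mpow_sub_one hA₁, mpow_sub_one hA₂, ← mul_assoc, ← mul_pow]
    norm_num
    rfl

end
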